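/- (Sylvester's law of inertia for hermitian forms) Let V be a finite-dimensional vector space over ℝ or ℂ with a hermitian form, and let β and β' be two orthonormal bases of V (bases with ⟨bᵢ,bⱼ⟩ = 0 for i ≠ j and ⟨bᵢ,bᵢ⟩ ∈ {-1,0,1}). Then the number of basis vectors with ⟨b,b⟩ = -1, the number with ⟨b,b⟩ = 0, and the number with ⟨b,b⟩ = +1 are the same for β and β'. -/

import Mathlib

open Finset Submodule Module RCLike

section Sylv

variable {𝕜 : Type*} [RCLike 𝕜] {V : Type*} [AddCommGroup V] [Module 𝕜 V]

private lemma sylv_expand {ι : Type*} [Fintype ι] (B : V →ₗ[𝕜] V →ₗ⋆[𝕜] 𝕜)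
    (b : Basis ι 𝕜 V) (hob : ∀ i j, i ≠ j → B (b i) (b j) = 0) (x : V) :
    RCLike.re (B x x) = ∑ i, ‖b.repr x i‖ ^ 2 * RCLike.re (B (b i) (b i)) := by
  classical
  have hx : x = ∑ i, b.repr x i • b i := (b.sum_repr x).symm
  have h1 : ∀ y, B x y = ∑ i, b.repr x i * B (b i) y := by
    intro y
    conv_lhs => rw [hx]
    rw [map_sum, LinearMap.sum_apply]
    refine Finset.sum_congr rfl fun i _ => ?_
    rw [map_smul, LinearMap.smul_apply, smul_eq_mul]
  have h2 : ∀ i, B (b i) x = starRingEnd 𝕜 (b.repr x i) * B (b i) (b i) := by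
    intro i
    conv_lhs => rw [hx]
    rw [map_sum]
    rw [Finset.sum_eq_single i (fun j _ hj => by
      rw [LinearMap.map_smulₛₗ, hob i j (Ne.symm hj), smul_zero]) (by simp)]
    rw [LinearMap.map_smulₛₗ, smul_eq_mul]
  have h3 : B x x = ∑ i, (‖b.repr x i‖ ^ 2 : ℝ) * B (b i) (b i) := by
    rw [h1 x]
    refine Finset.sum_congr rfl fun i _ => ?_
    rw [h2 i, ← mul_assoc, RCLike.mul_conj, RCLike.ofReal_pow]
  rw [h3, map_sum]
  refine Finset.sum_congr rfl fun i _ => ?_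
  rw [RCLike.re_ofReal_mul]

private lemma sylv_pos {ι : Type*} [Fintype ι] (B : V →ₗ[𝕜] V →ₗ⋆[𝕜] 𝕜)
    (b : Basis ι 𝕜 V) (hob : ∀ i j, i ≠ j → B (b i) (b j) = 0)
    (p : ι → Prop) (hp : ∀ i, p i → B (b i) (b i) = 1)
    (x : V) (hx : x ∈ span 𝕜 (b '' {i | p i})) (hx0 : x ≠ 0) :
    0 < RCLike.re (B x x) := by
  classical
  rw [sylv_expand B b hob]
  have hsupp : ∀ i, b.repr x i ≠ 0 → p i := fun i hi => b.mem_span_image.mp hx (Finsupp.mem_support_iff.mpr hi)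
  have hne : ∃ i, b.repr x i ≠ 0 := by
    by_contra h
    push_neg at h
    exact hx0 (by simpa using congrArg b.repr.symm (Finsupp.ext h : b.repr x = 0))
  obtain ⟨i₀, hi₀⟩ := hne
  refine Finset.sum_pos' (fun i _ => ?_) ⟨i₀, Finset.mem_univ _, ?_⟩
  · by_cases hc : b.repr x i = 0
    · simp [hc]
    · rw [hp i (hsupp i hc)]
      simp [sq_nonneg]
  · rw [hp i₀ (hsupp i₀ hi₀)]
    simpa using pow_pos (norm_pos_iff.mpr hi₀) 2

private lemma sylv_nonpos {ι : Type*} [Fintype ι] (B : V →ₗ[𝕜] V →ₗ⋆[𝕜] 𝕜)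
    (b : Basis ι 𝕜 V) (hob : ∀ i j, i ≠ j → B (b i) (b j) = 0)
    (p : ι → Prop) (hp : ∀ i, p i → B (b i) (b i) = 0 ∨ B (b i) (b i) = -1)
    (x : V) (hx : x ∈ span 𝕜 (b '' {i | p i})) :
    RCLike.re (B x x) ≤ 0 := by
  classical
  rw [sylv_expand B b hob]
  have hsupp : ∀ i, b.repr x i ≠ 0 → p i := fun i hi => b.mem_span_image.mp hx (Finsupp.mem_support_iff.mpr hi)
  refine Finset.sum_nonpos fun i _ => ?_
  by_cases hc : b.repr x i = 0
  · simp [hc]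
  · rcases hp i (hsupp i hc) with h | h <;> rw [h]
    · simp
    · simp [sq_nonneg]

private lemma sylv_rank [FiniteDimensional 𝕜 V] {ι : Type*} [Fintype ι] (b : Basis ι 𝕜 V)
    (p : ι → Prop) :
    finrank 𝕜 (span 𝕜 (b '' {i | p i})) = Nat.card {i // p i} := by
  classical
  have li : LinearIndependent 𝕜 (fun i : {i // p i} => b i) :=
    b.linearIndependent.comp _ Subtype.val_injective
  have hr : Set.range (fun i : {i // p i} => b i) = b '' {i | p i} := by
    rw [show (fun i : {i // p i} => b i) = b ∘ Subtype.val from rfl, Set.range_comp,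
      Subtype.range_val_subtype]
  rw [← hr, finrank_span_eq_card li, Nat.card_eq_fintype_card]

private lemma sylv_or_card {ι : Type*} [Fintype ι] (p q : ι → Prop)
    (h : ∀ i, ¬(p i ∧ q i)) :
    Nat.card {i // p i ∨ q i} = Nat.card {i // p i} + Nat.card {i // q i} := by
  classical
  simp_rw [Nat.card_eq_fintype_card, Fintype.card_subtype]
  rw [Finset.filter_or, Finset.card_union_of_disjoint]
  rw [Finset.disjoint_left]
  intro i hi hi'
  simp only [Finset.mem_filter] at hi hi'
  exact h i ⟨hi.2, hi'.2⟩

private lemma sylv_card {ι : Type*} [Fintype ι] (v : ι → 𝕜)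
    (hv : ∀ i, v i = -1 ∨ v i = 0 ∨ v i = 1) :
    Nat.card {i // v i = -1} + Nat.card {i // v i = 0} + Nat.card {i // v i = 1}
      = Fintype.card ι := by
  classical
  have h1 : Nat.card {i // v i = -1 ∨ v i = 0 ∨ v i = 1} = Fintype.card ι := by
    rw [Nat.card_eq_fintype_card]
    exact Fintype.card_congr (Equiv.subtypeUnivEquiv hv)
  rw [sylv_or_card _ _ (fun i => by rintro ⟨h, h' | h'⟩ <;> rw [h] at h' <;> norm_num at h')] at h1
  rw [sylv_or_card _ _ (fun i => by rintro ⟨h, h'⟩; rw [h] at h'; norm_num at h')] at h1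
  omega

private lemma sylv_le [FiniteDimensional 𝕜 V]
    {ι ι' : Type*} [Fintype ι] [Fintype ι'] (B : V →ₗ[𝕜] V →ₗ⋆[𝕜] 𝕜)
    (b : Basis ι 𝕜 V) (b' : Basis ι' 𝕜 V)
    (hob : ∀ i j, i ≠ j → B (b i) (b j) = 0)
    (hob' : ∀ i j, i ≠ j → B (b' i) (b' j) = 0)
    (hvb' : ∀ i, B (b' i) (b' i) = -1 ∨ B (b' i) (b' i) = 0 ∨ B (b' i) (b' i) = 1) :
    Nat.card {i // B (b i) (b i) = 1} ≤ Nat.card {i // B (b' i) (b' i) = 1} := by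
  classical
  set P := span 𝕜 (b '' {i | B (b i) (b i) = 1}) with hP
  set U := span 𝕜 (b' '' {i | B (b' i) (b' i) = 0 ∨ B (b' i) (b' i) = -1}) with hU
  have hdisj : P ⊓ U = ⊥ := by
    rw [eq_bot_iff]
    intro x hx
    rw [Submodule.mem_bot]
    by_contra h0
    exact absurd (sylv_pos B b hob _ (fun i hi => hi) x hx.1 h0)
      (not_lt.mpr (sylv_nonpos B b' hob' _ (fun i hi => hi) x hx.2))
  have hsum := Submodule.finrank_sup_add_finrank_inf_eq P U
  rw [hdisj, finrank_bot, add_zero] at hsum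
  have hle : finrank 𝕜 (P ⊔ U : Submodule 𝕜 V) ≤ finrank 𝕜 V := Submodule.finrank_le _
  have hPr : finrank 𝕜 P = Nat.card {i // B (b i) (b i) = 1} := sylv_rank b _
  have hUr : finrank 𝕜 U = Nat.card {i // B (b' i) (b' i) = 0} +
      Nat.card {i // B (b' i) (b' i) = -1} := by
    rw [hU, sylv_rank b' _]
    exact sylv_or_card _ _ (fun i => by rintro ⟨h, h'⟩; rw [h] at h'; norm_num at h')
  have htot : Nat.card {i // B (b' i) (b' i) = -1} + Nat.card {i // B (b' i) (b' i) = 0}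
      + Nat.card {i // B (b' i) (b' i) = 1} = finrank 𝕜 V := by
    rw [sylv_card _ hvb', finrank_eq_card_basis b']
  omega

end Sylv

/-- Sylvester's law of inertia for hermitian forms: any two orthonormal bases of
a finite-dimensional space over ℝ or ℂ with a hermitian form have the same
number of basis vectors with self-product `-1`, `0`, and `+1`. -/
theorem stmt_9 {𝕜 : Type*} [RCLike 𝕜] {V : Type*} [AddCommGroup V] [Module 𝕜 V]
    [FiniteDimensional 𝕜 V] (B : V →ₗ[𝕜] V →ₗ⋆[𝕜] 𝕜)
    (hB : ∀ x y, B x y = starRingEnd 𝕜 (B y x))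
    {ι ι' : Type*} [Fintype ι] [Fintype ι'] (b : Basis ι 𝕜 V) (b' : Basis ι' 𝕜 V)
    (hob : ∀ i j, i ≠ j → B (b i) (b j) = 0)
    (hvb : ∀ i, B (b i) (b i) = -1 ∨ B (b i) (b i) = 0 ∨ B (b i) (b i) = 1)
    (hob' : ∀ i j, i ≠ j → B (b' i) (b' j) = 0)
    (hvb' : ∀ i, B (b' i) (b' i) = -1 ∨ B (b' i) (b' i) = 0 ∨ B (b' i) (b' i) = 1) :
    Nat.card {i // B (b i) (b i) = -1} = Nat.card {i // B (b' i) (b' i) = -1} ∧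
    Nat.card {i // B (b i) (b i) = 0} = Nat.card {i // B (b' i) (b' i) = 0} ∧
    Nat.card {i // B (b i) (b i) = 1} = Nat.card {i // B (b' i) (b' i) = 1} := by
  classical
  have hpp : Nat.card {i // B (b i) (b i) = 1} = Nat.card {i // B (b' i) (b' i) = 1} :=
    le_antisymm (sylv_le B b b' hob hob' hvb') (sylv_le B b' b hob' hob hvb)
  -- minus case via -B
  have hobN : ∀ i j, i ≠ j → (-B) (b i) (b j) = 0 := fun i j h => by
    simp [hob i j h]
  have hobN' : ∀ i j, i ≠ j → (-B) (b' i) (b' j) = 0 := fun i j h => by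
    simp [hob' i j h]
  have hvbN : ∀ i, (-B) (b i) (b i) = -1 ∨ (-B) (b i) (b i) = 0 ∨ (-B) (b i) (b i) = 1 := by
    intro i
    rcases hvb i with h | h | h <;> simp [h]
  have hvbN' : ∀ i, (-B) (b' i) (b' i) = -1 ∨ (-B) (b' i) (b' i) = 0 ∨ (-B) (b' i) (b' i) = 1 := by
    intro i
    rcases hvb' i with h | h | h <;> simp [h]
  have e1 : Nat.card {i // B (b i) (b i) = -1} = Nat.card {i // (-B) (b i) (b i) = 1} :=
    Nat.card_congr (Equiv.subtypeEquivRight fun i => by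
      simp [neg_eq_iff_eq_neg, eq_comm])
  have e2 : Nat.card {i // B (b' i) (b' i) = -1} = Nat.card {i // (-B) (b' i) (b' i) = 1} :=
    Nat.card_congr (Equiv.subtypeEquivRight fun i => by
      simp [neg_eq_iff_eq_neg, eq_comm])
  have hmm : Nat.card {i // B (b i) (b i) = -1} = Nat.card {i // B (b' i) (b' i) = -1} := by
    rw [e1, e2]
    exact le_antisymm (sylv_le (-B) b b' hobN hobN' hvbN') (sylv_le (-B) b' b hobN' hobN hvbN)
  have t1 : Nat.card {i // B (b i) (b i) = -1} + Nat.card {i // B (b i) (b i) = 0} +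
      Nat.card {i // B (b i) (b i) = 1} = Fintype.card ι := sylv_card _ hvb
  have t2 : Nat.card {i // B (b' i) (b' i) = -1} + Nat.card {i // B (b' i) (b' i) = 0} +
      Nat.card {i // B (b' i) (b' i) = 1} = Fintype.card ι' := sylv_card _ hvb'
  have hdim : Fintype.card ι = Fintype.card ι' := by
    rw [← finrank_eq_card_basis b, ← finrank_eq_card_basis b']
  exact ⟨hmm, by omega, hpp⟩
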